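/- For every real number γ > 0 there exists η > 0 with the following property: for every b ∈ ℝ such that the line L_b = {(t, γ(t−b)) : t ∈ ℝ} meets the interior of E, there exist a natural number n ≥ 1 and i ∈ {1,2} such that the one-dimensional Lebesgue measure of {t ∈ ℝ : (t, γ(t−b)) ∈ Eₙⁱ} is at least η times the one-dimensional Lebesgue measure of {t ∈ ℝ : (t, γ(t−b)) ∈ E}. -/

import Mathlib

open MeasureTheory

/-- The open triangle with given vertices: the interior of their convex hull. -/
def triInterior (a b c : ℝ × ℝ) : Set (ℝ × ℝ) :=
  interior (convexHull ℝ {a, b, c})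

/-- The closed triangle `E` with vertices `(0,0)`, `(1,0)`, `(0,1)`. -/
def E : Set (ℝ × ℝ) := {p : ℝ × ℝ | 0 ≤ p.1 ∧ 0 ≤ p.2 ∧ p.1 + p.2 ≤ 1}

/-- `Eₙ¹`: the interior of the right triangle with vertices
`((2^{n-1}-1)/2^{n-1}, 1/2ⁿ)`, `((2ⁿ-1)/2ⁿ, 0)`, `((2ⁿ-1)/2ⁿ, 1/2ⁿ)`. -/
noncomputable def En1 (n : ℕ) : Set (ℝ × ℝ) :=
  triInterior (((2 : ℝ) ^ (n - 1) - 1) / 2 ^ (n - 1), 1 / 2 ^ n)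
    (((2 : ℝ) ^ n - 1) / 2 ^ n, 0)
    (((2 : ℝ) ^ n - 1) / 2 ^ n, 1 / 2 ^ n)

/-- `Eₙ²`: the interior of the triangle with vertices
`(1/2ⁿ, (2^{n-1}-1)/2^{n-1})`, `(0, (2ⁿ-1)/2ⁿ)`, `(1/2ⁿ, (2ⁿ-1)/2ⁿ)`. -/
noncomputable def En2 (n : ℕ) : Set (ℝ × ℝ) :=
  triInterior (1 / 2 ^ n, ((2 : ℝ) ^ (n - 1) - 1) / 2 ^ (n - 1))
    (0, ((2 : ℝ) ^ n - 1) / 2 ^ n)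
    (1 / 2 ^ n, ((2 : ℝ) ^ n - 1) / 2 ^ n)

lemma combo_mem_hull (v₁ v₂ v₃ : ℝ × ℝ) (a b c : ℝ) (ha : 0 ≤ a) (hb : 0 ≤ b) (hc : 0 ≤ c)
    (habc : a + b + c = 1) :
    a • v₁ + b • v₂ + c • v₃ ∈ convexHull ℝ ({v₁, v₂, v₃} : Set (ℝ × ℝ)) := by
  have := Finset.centerMass_mem_convexHull (Finset.univ : Finset (Fin 3))
    (w := ![a, b, c]) (z := ![v₁, v₂, v₃]) (s := ({v₁, v₂, v₃} : Set (ℝ × ℝ)))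
    (by intro i _; fin_cases i <;> simpa)
    (by simp [Fin.sum_univ_three]; linarith)
    (by intro i _; fin_cases i <;> simp)
  rw [Finset.centerMass, Fin.sum_univ_three, Fin.sum_univ_three] at this
  simpa [habc] using this

lemma mem_tri1 (s x y : ℝ) (hs : 0 < s) (h1 : x < 1 - s) (h2 : y < s) (h3 : 1 - s < x + y) :
    (x, y) ∈ triInterior (1 - 2*s, s) (1 - s, 0) (1 - s, s) := by
  have hO : IsOpen {p : ℝ × ℝ | p.1 < 1 - s ∧ p.2 < s ∧ 1 - s < p.1 + p.2} := by
    have o1 : IsOpen {p : ℝ × ℝ | p.1 < 1 - s} := isOpen_lt continuous_fst continuous_const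
    have o2 : IsOpen {p : ℝ × ℝ | p.2 < s} := isOpen_lt continuous_snd continuous_const
    have o3 : IsOpen {p : ℝ × ℝ | 1 - s < p.1 + p.2} :=
      isOpen_lt continuous_const (continuous_fst.add continuous_snd)
    exact o1.inter (o2.inter o3)
  have hsub : {p : ℝ × ℝ | p.1 < 1 - s ∧ p.2 < s ∧ 1 - s < p.1 + p.2} ⊆
      convexHull ℝ ({(1 - 2*s, s), (1 - s, 0), (1 - s, s)} : Set (ℝ × ℝ)) := by
    rintro ⟨u, v⟩ ⟨hu1, hv2, hv3⟩
    simp only [Set.mem_setOf_eq] at hu1 hv2 hv3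
    have key := combo_mem_hull (1 - 2*s, s) (1 - s, 0) (1 - s, s)
      ((1 - s - u)/s) (1 - v/s) ((u + v - 1 + s)/s)
      (by apply div_nonneg _ hs.le; linarith)
      (by rw [sub_nonneg, div_le_one hs]; linarith)
      (by apply div_nonneg _ hs.le; linarith)
      (by field_simp; ring)
    have : ((1 - s - u)/s) • ((1 - 2*s, s) : ℝ × ℝ) + (1 - v/s) • ((1 - s, 0) : ℝ × ℝ)
        + ((u + v - 1 + s)/s) • ((1 - s, s) : ℝ × ℝ) = (u, v) := by
      simp only [Prod.smul_mk, Prod.mk_add_mk, smul_eq_mul, Prod.mk.injEq]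
      constructor <;> field_simp <;> ring
    rwa [this] at key
  exact interior_maximal hsub hO ⟨h1, h2, h3⟩

lemma mem_tri2 (s x y : ℝ) (hs : 0 < s) (h1 : y < 1 - s) (h2 : x < s) (h3 : 1 - s < x + y) :
    (x, y) ∈ triInterior (s, 1 - 2*s) (0, 1 - s) (s, 1 - s) := by
  have hO : IsOpen {p : ℝ × ℝ | p.2 < 1 - s ∧ p.1 < s ∧ 1 - s < p.1 + p.2} := by
    have o1 : IsOpen {p : ℝ × ℝ | p.2 < 1 - s} := isOpen_lt continuous_snd continuous_const
    have o2 : IsOpen {p : ℝ × ℝ | p.1 < s} := isOpen_lt continuous_fst continuous_const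
    have o3 : IsOpen {p : ℝ × ℝ | 1 - s < p.1 + p.2} :=
      isOpen_lt continuous_const (continuous_fst.add continuous_snd)
    exact o1.inter (o2.inter o3)
  have hsub : {p : ℝ × ℝ | p.2 < 1 - s ∧ p.1 < s ∧ 1 - s < p.1 + p.2} ⊆
      convexHull ℝ ({(s, 1 - 2*s), (0, 1 - s), (s, 1 - s)} : Set (ℝ × ℝ)) := by
    rintro ⟨u, v⟩ ⟨hv1, hu2, hv3⟩
    simp only [Set.mem_setOf_eq] at hv1 hu2 hv3
    have key := combo_mem_hull (s, 1 - 2*s) (0, 1 - s) (s, 1 - s)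
      ((1 - s - v)/s) (1 - u/s) ((u + v - 1 + s)/s)
      (by apply div_nonneg _ hs.le; linarith)
      (by rw [sub_nonneg, div_le_one hs]; linarith)
      (by apply div_nonneg _ hs.le; linarith)
      (by field_simp; ring)
    have : ((1 - s - v)/s) • ((s, 1 - 2*s) : ℝ × ℝ) + (1 - u/s) • ((0, 1 - s) : ℝ × ℝ)
        + ((u + v - 1 + s)/s) • ((s, 1 - s) : ℝ × ℝ) = (u, v) := by
      simp only [Prod.smul_mk, Prod.mk_add_mk, smul_eq_mul, Prod.mk.injEq]
      constructor <;> field_simp <;> ring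
    rwa [this] at key
  exact interior_maximal hsub hO ⟨h1, h2, h3⟩

lemma dyadic {L U : ℝ} (hL : 0 < L) (hLh : L ≤ 1/2) (hU : 2*L ≤ U) :
    ∃ n : ℕ, 1 ≤ n ∧ L ≤ (1/2:ℝ)^n ∧ (1/2:ℝ)^n ≤ U := by
  by_cases h : 1/2 ≤ U
  · exact ⟨1, le_refl _, by simpa using hLh, by simpa using h⟩
  · push_neg at h
    have hU0 : 0 < U := lt_of_lt_of_le (by linarith) hU
    have hex : ∃ n : ℕ, (1/2:ℝ)^n ≤ U := by
      obtain ⟨n, hn⟩ := exists_pow_lt_of_lt_one hU0 (by norm_num : (1/2:ℝ) < 1)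
      exact ⟨n, hn.le⟩
    have hn := Nat.find_spec hex
    have hne : Nat.find hex ≠ 0 := by
      intro h0
      rw [h0] at hn
      norm_num at hn
      linarith
    obtain ⟨m, hm⟩ : ∃ m, Nat.find hex = m + 1 := ⟨Nat.find hex - 1, by omega⟩
    have hmin : ¬ ((1/2:ℝ)^m ≤ U) := Nat.find_min hex (by omega)
    push_neg at hmin
    refine ⟨Nat.find hex, by omega, ?_, hn⟩
    rw [hm] at hn ⊢
    rw [pow_succ] at hn ⊢
    nlinarith [pow_pos (by norm_num : (0:ℝ) < 1/2) m]

lemma pow_half (m : ℕ) : (1:ℝ) / 2 ^ (m+1) = (1/2:ℝ)^(m+1) := by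
  rw [div_pow, one_pow]

lemma En1_succ (m : ℕ) : En1 (m+1) = triInterior (1 - 2*(1/2:ℝ)^(m+1), (1/2:ℝ)^(m+1))
    (1 - (1/2:ℝ)^(m+1), 0) (1 - (1/2:ℝ)^(m+1), (1/2:ℝ)^(m+1)) := by
  have h2 : (2:ℝ)^m ≠ 0 := by positivity
  have h2' : (2:ℝ)^(m+1) ≠ 0 := by positivity
  have e1 : ((2:ℝ)^m - 1)/2^m = 1 - 2*(1/2:ℝ)^(m+1) := by
    rw [← pow_half]
    field_simp
    rw [pow_succ]
    ring
  have e2 : ((2:ℝ)^(m+1) - 1)/2^(m+1) = 1 - (1/2:ℝ)^(m+1) := by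
    rw [← pow_half]
    field_simp
  unfold En1
  simp only [Nat.add_sub_cancel]
  rw [e1, e2, pow_half]

lemma En2_succ (m : ℕ) : En2 (m+1) = triInterior ((1/2:ℝ)^(m+1), 1 - 2*(1/2:ℝ)^(m+1))
    (0, 1 - (1/2:ℝ)^(m+1)) ((1/2:ℝ)^(m+1), 1 - (1/2:ℝ)^(m+1)) := by
  have h2 : (2:ℝ)^m ≠ 0 := by positivity
  have h2' : (2:ℝ)^(m+1) ≠ 0 := by positivity
  have e1 : ((2:ℝ)^m - 1)/2^m = 1 - 2*(1/2:ℝ)^(m+1) := by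
    rw [← pow_half]
    field_simp
    rw [pow_succ]
    ring
  have e2 : ((2:ℝ)^(m+1) - 1)/2^(m+1) = 1 - (1/2:ℝ)^(m+1) := by
    rw [← pow_half]
    field_simp
  unfold En2
  simp only [Nat.add_sub_cancel]
  rw [e1, e2, pow_half]
section
variable {γ μ d e s : ℝ}

lemma arith1 (hγ : 0 < γ) (hμ0 : 0 < μ) (hμ1 : μ ≤ 1) (hd0 : 0 < d) (hd1 : d ≤ 1) :
    d*γ*(1 + μ/(2*(2*γ+1)))/(2*γ+1) ≤ 1/2 := by
  have heq : 1/2 - d*γ*(1 + μ/(2*(2*γ+1)))/(2*γ+1)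
      = ((2*γ+1)^2 - d*γ*(2*(2*γ+1)+μ))/(2*(2*γ+1)^2) := by
    field_simp
  have hnum : 0 ≤ (2*γ+1)^2 - d*γ*(2*(2*γ+1)+μ) := by
    nlinarith [mul_nonneg (by linarith : (0:ℝ) ≤ 1-d) (by positivity : (0:ℝ) ≤ γ*(2*(2*γ+1)+μ)),
      mul_nonneg hγ.le (by linarith : (0:ℝ) ≤ 1-μ)]
  nlinarith [div_nonneg hnum (by positivity : (0:ℝ) ≤ 2*(2*γ+1)^2)]

lemma arith2 (hγ : 0 < γ) (hμ0 : 0 < μ) (hμ1 : μ ≤ 1) (hμγ : μ ≤ γ) (hd0 : 0 < d) :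
    2*(d*γ*(1 + μ/(2*(2*γ+1)))/(2*γ+1)) ≤ d*(1 - μ/(2*γ*(2*γ+1))) := by
  have heq : d*(1 - μ/(2*γ*(2*γ+1))) - 2*(d*γ*(1 + μ/(2*(2*γ+1)))/(2*γ+1))
      = d*(8*γ^2+4*γ-4*γ^2*μ-4*γ*μ-2*μ)/(4*γ*(2*γ+1)^2) := by
    field_simp
    ring
  have hnum : 0 ≤ d*(8*γ^2+4*γ-4*γ^2*μ-4*γ*μ-2*μ) := by
    apply mul_nonneg hd0.le
    nlinarith [mul_nonneg (mul_nonneg hγ.le hγ.le) (by linarith : (0:ℝ) ≤ 1-μ),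
      mul_nonneg hγ.le (by linarith : (0:ℝ) ≤ γ-μ)]
  nlinarith [div_nonneg hnum (by positivity : (0:ℝ) ≤ 4*γ*(2*γ+1)^2)]

lemma arith3 (hγ : 0 < γ) (hμ0 : 0 < μ) (hd0 : 0 < d)
    (hsU : s ≤ d*(1 - μ/(2*γ*(2*γ+1)))) :
    (μ/(4*(1+γ)))*d ≤ γ*(d-s) := by
  have h1 : d*(μ/(2*γ*(2*γ+1))) ≤ d - s := by nlinarith
  have h2 : γ*(d*(μ/(2*γ*(2*γ+1)))) = d*μ/(2*(2*γ+1)) := by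
    field_simp
  have h3 : (μ/(4*(1+γ)))*d ≤ d*μ/(2*(2*γ+1)) := by
    have heq : d*μ/(2*(2*γ+1)) - (μ/(4*(1+γ)))*d = d*μ*2/((2*(2*γ+1))*(4*(1+γ))) := by
      field_simp
      ring
    nlinarith [div_nonneg (by positivity : (0:ℝ) ≤ d*μ*2)
      (by positivity : (0:ℝ) ≤ (2*(2*γ+1))*(4*(1+γ)))]
  nlinarith [mul_le_mul_of_nonneg_left h1 hγ.le]

lemma arith4 (hγ : 0 < γ) (hμ0 : 0 < μ) (hd0 : 0 < d)
    (hsL : d*γ*(1 + μ/(2*(2*γ+1)))/(2*γ+1) ≤ s) :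
    γ*d*(1+μ/(4*(1+γ))) ≤ s*(2*γ+1) := by
  have h1 : d*γ*(1 + μ/(2*(2*γ+1))) ≤ s*(2*γ+1) :=
    (div_le_iff₀ (by linarith : (0:ℝ) < 2*γ+1)).mp hsL
  have h2 : γ*d*(1+μ/(4*(1+γ))) ≤ d*γ*(1 + μ/(2*(2*γ+1))) := by
    have heq : d*γ*(1 + μ/(2*(2*γ+1))) - γ*d*(1+μ/(4*(1+γ)))
        = d*γ*μ*2/((2*(2*γ+1))*(4*(1+γ))) := by
      field_simp
      ring
    nlinarith [div_nonneg (by positivity : (0:ℝ) ≤ d*γ*μ*2)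
      (by positivity : (0:ℝ) ≤ (2*(2*γ+1))*(4*(1+γ)))]
  linarith

lemma arith5 (hγ : 0 < γ) (hμ0 : 0 < μ) (hμγ : μ ≤ γ) (he0 : 0 < e) (he1 : e ≤ 1) :
    e*(1 + μ/(2*(2+γ)))/(2+γ) ≤ 1/2 := by
  have heq : 1/2 - e*(1 + μ/(2*(2+γ)))/(2+γ)
      = ((2+γ)^2 - e*(2*(2+γ)+μ))/(2*(2+γ)^2) := by
    field_simp
  have hnum : 0 ≤ (2+γ)^2 - e*(2*(2+γ)+μ) := by
    nlinarith [mul_nonneg (by linarith : (0:ℝ) ≤ 1-e) (by positivity : (0:ℝ) ≤ 2*(2+γ)+μ),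
      mul_nonneg he0.le (by linarith : (0:ℝ) ≤ γ-μ)]
  nlinarith [div_nonneg hnum (by positivity : (0:ℝ) ≤ 2*(2+γ)^2)]

lemma arith6 (hγ : 0 < γ) (hμ0 : 0 < μ) (hμ1 : μ ≤ 1) (hμγ : μ ≤ γ) (he0 : 0 < e) :
    2*(e*(1 + μ/(2*(2+γ)))/(2+γ)) ≤ e*(1 - γ*μ/(2*(2+γ))) := by
  have heq : e*(1 - γ*μ/(2*(2+γ))) - 2*(e*(1 + μ/(2*(2+γ)))/(2+γ))
      = e*(4*γ+2*γ^2-2*γ*μ-γ^2*μ-2*μ)/(2*(2+γ)^2) := by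
    field_simp
    ring
  have hnum : 0 ≤ e*(4*γ+2*γ^2-2*γ*μ-γ^2*μ-2*μ) := by
    apply mul_nonneg he0.le
    nlinarith [mul_nonneg (mul_nonneg hγ.le hγ.le) (by linarith : (0:ℝ) ≤ 1-μ),
      mul_nonneg hγ.le (by linarith : (0:ℝ) ≤ 1-μ), (by linarith : (0:ℝ) ≤ γ-μ)]
  nlinarith [div_nonneg hnum (by positivity : (0:ℝ) ≤ 2*(2+γ)^2)]

lemma arith7 (hγ : 0 < γ) (hμ0 : 0 < μ) (he0 : 0 < e)
    (hsL : e*(1 + μ/(2*(2+γ)))/(2+γ) ≤ s) :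
    e*(1+μ/(4*(1+γ))) ≤ s*(2+γ) := by
  have h1 : e*(1 + μ/(2*(2+γ))) ≤ s*(2+γ) :=
    (div_le_iff₀ (by linarith : (0:ℝ) < 2+γ)).mp hsL
  have h2 : e*(1+μ/(4*(1+γ))) ≤ e*(1 + μ/(2*(2+γ))) := by
    have heq : e*(1 + μ/(2*(2+γ))) - e*(1+μ/(4*(1+γ)))
        = e*μ*(2*γ)/((2*(2+γ))*(4*(1+γ))) := by
      field_simp
      ring
    nlinarith [div_nonneg (by positivity : (0:ℝ) ≤ e*μ*(2*γ))
      (by positivity : (0:ℝ) ≤ (2*(2+γ))*(4*(1+γ)))]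
  linarith

lemma arith8 (hγ : 0 < γ) (hμ0 : 0 < μ) (he0 : 0 < e)
    (hsU : s ≤ e*(1 - γ*μ/(2*(2+γ)))) :
    (μ/(4*(1+γ)))*γ*e ≤ e - s := by
  have h1 : e*(γ*μ/(2*(2+γ))) ≤ e - s := by nlinarith
  have h2 : (μ/(4*(1+γ)))*γ*e ≤ e*(γ*μ/(2*(2+γ))) := by
    have heq : e*(γ*μ/(2*(2+γ))) - (μ/(4*(1+γ)))*γ*e
        = e*γ*μ*(2*γ)/((2*(2+γ))*(4*(1+γ))) := by
      field_simp
      ring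
    nlinarith [div_nonneg (by positivity : (0:ℝ) ≤ e*γ*μ*(2*γ))
      (by positivity : (0:ℝ) ≤ (2*(2+γ))*(4*(1+γ)))]
  linarith
end


theorem stmt1 (γ : ℝ) (hγ : 0 < γ) :
    ∃ η > (0 : ℝ), ∀ b : ℝ,
      (∃ t : ℝ, (t, γ * (t - b)) ∈ interior E) →
      ∃ n : ℕ, 1 ≤ n ∧
        (ENNReal.ofReal η * volume {t : ℝ | (t, γ * (t - b)) ∈ E} ≤
            volume {t : ℝ | (t, γ * (t - b)) ∈ En1 n} ∨
          ENNReal.ofReal η * volume {t : ℝ | (t, γ * (t - b)) ∈ E} ≤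
            volume {t : ℝ | (t, γ * (t - b)) ∈ En2 n}) := by
  have hγ1 : (0:ℝ) < 1 + γ := by linarith
  set μ := min 1 γ with hμdef
  have hμ0 : 0 < μ := lt_min one_pos hγ
  have hμ1 : μ ≤ 1 := min_le_left _ _
  have hμγ : μ ≤ γ := min_le_right _ _
  refine ⟨μ/(4*(1+γ)), by positivity, ?_⟩
  intro b _
  set η := μ/(4*(1+γ)) with hηdef
  have hη0 : 0 < η := by positivity
  set t₁ := (1 + γ*b)/(1+γ) with ht₁
  set M := max 0 b with hM
  have hEsub : {t : ℝ | (t, γ*(t-b)) ∈ E} ⊆ Set.Icc M t₁ := by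
    intro t ht
    simp only [E, Set.mem_setOf_eq] at ht
    obtain ⟨h1, h2, h3⟩ := ht
    constructor
    · apply max_le h1
      nlinarith
    · rw [ht₁, le_div_iff₀ hγ1]
      nlinarith
  have hEvol : volume {t : ℝ | (t, γ*(t-b)) ∈ E} ≤ ENNReal.ofReal (t₁ - M) := by
    calc volume {t : ℝ | (t, γ*(t-b)) ∈ E} ≤ volume (Set.Icc M t₁) := measure_mono hEsub
    _ = ENNReal.ofReal (t₁ - M) := Real.volume_Icc
  by_cases hch : M < t₁
  · rcases le_or_gt 0 b with hb | hb
    · -- Case b ≥ 0 : use En1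
      have hMb : M = b := max_eq_right hb
      rw [hMb] at hch hEvol
      have hd : 0 < 1 - b := by
        rw [ht₁, lt_div_iff₀ hγ1] at hch
        nlinarith
      set d := 1 - b with hddef
      have hd1 : d ≤ 1 := by rw [hddef]; linarith
      obtain ⟨n, hn1, hsL, hsU⟩ := dyadic (L := d*γ*(1 + μ/(2*(2*γ+1)))/(2*γ+1))
        (U := d*(1 - μ/(2*γ*(2*γ+1))))
        (by positivity) (arith1 hγ hμ0 hμ1 hd hd1) (arith2 hγ hμ0 hμ1 hμγ hd)
      obtain ⟨m, rfl⟩ : ∃ m, n = m+1 := ⟨n-1, by omega⟩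
      set s := (1/2:ℝ)^(m+1) with hsdef
      have hs0 : 0 < s := by positivity
      refine ⟨m+1, hn1, Or.inl ?_⟩
      have key1 : η*d ≤ γ*(d-s) := arith3 hγ hμ0 hd hsU
      have key2 : γ*d*(1+η) ≤ s*(2*γ+1) := arith4 hγ hμ0 hd hsL
      have hIoo : Set.Ioo ((1 - s + γ*b)/(1+γ)) (min (1-s) (b + s/γ)) ⊆
          {t : ℝ | (t, γ*(t-b)) ∈ En1 (m+1)} := by
        intro t ⟨htl, htr⟩
        simp only [Set.mem_setOf_eq]
        rw [En1_succ, ← hsdef]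
        apply mem_tri1 s t (γ*(t-b)) hs0
        · exact lt_of_lt_of_le htr (min_le_left _ _)
        · have h' : t < b + s/γ := lt_of_lt_of_le htr (min_le_right _ _)
          have h'' : t - b < s/γ := by linarith
          calc γ*(t-b) = (t-b)*γ := by ring
          _ < s := by rwa [← lt_div_iff₀ hγ]
        · rw [div_lt_iff₀ hγ1] at htl
          nlinarith
      have hEn1vol : ENNReal.ofReal (min (1-s) (b+s/γ) - (1-s+γ*b)/(1+γ)) ≤
          volume {t : ℝ | (t, γ*(t-b)) ∈ En1 (m+1)} := by
        rw [← Real.volume_Ioo]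
        exact measure_mono hIoo
      have hl : t₁ - b = d/(1+γ) := by
        rw [ht₁, hddef]
        field_simp
        ring
      have c1 : η*(t₁-b) + (1-s+γ*b)/(1+γ) ≤ 1-s := by
        rw [hl]
        have heq : (1-s) - (η*(d/(1+γ)) + (1-s+γ*b)/(1+γ)) = (γ*(d-s) - η*d)/(1+γ) := by
          rw [hddef]
          field_simp
          ring
        have h0 : (0:ℝ) ≤ (γ*(d-s) - η*d)/(1+γ) := div_nonneg (by linarith) hγ1.le
        linarith
      have c2 : η*(t₁-b) + (1-s+γ*b)/(1+γ) ≤ b + s/γ := by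
        rw [hl]
        have heq : (b + s/γ) - (η*(d/(1+γ)) + (1-s+γ*b)/(1+γ))
            = (s*(2*γ+1) - γ*d*(1+η))/(γ*(1+γ)) := by
          rw [hddef]
          field_simp
          ring
        have h0 : (0:ℝ) ≤ (s*(2*γ+1) - γ*d*(1+η))/(γ*(1+γ)) :=
          div_nonneg (by linarith) (by positivity)
        linarith
      have hkey : η * (t₁ - b) ≤ min (1-s) (b+s/γ) - (1-s+γ*b)/(1+γ) := by
        have hmin := le_min c1 c2
        linarith [hmin]
      calc ENNReal.ofReal η * volume {t : ℝ | (t, γ*(t-b)) ∈ E}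
          ≤ ENNReal.ofReal η * ENNReal.ofReal (t₁ - b) := mul_le_mul_right hEvol _
        _ = ENNReal.ofReal (η*(t₁-b)) := (ENNReal.ofReal_mul hη0.le).symm
        _ ≤ ENNReal.ofReal (min (1-s) (b+s/γ) - (1-s+γ*b)/(1+γ)) :=
            ENNReal.ofReal_le_ofReal hkey
        _ ≤ volume {t : ℝ | (t, γ*(t-b)) ∈ En1 (m+1)} := hEn1vol
    · -- Case b < 0 : use En2
      have hMb : M = 0 := max_eq_left hb.le
      rw [hMb] at hch hEvol
      have he : 0 < 1 + γ*b := by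
        rw [ht₁, lt_div_iff₀ hγ1] at hch
        nlinarith
      set e := 1 + γ*b with hedef
      have he1 : e ≤ 1 := by
        rw [hedef]
        nlinarith
      obtain ⟨n, hn1, hsL, hsU⟩ := dyadic (L := e*(1 + μ/(2*(2+γ)))/(2+γ))
        (U := e*(1 - γ*μ/(2*(2+γ))))
        (by positivity) (arith5 hγ hμ0 hμγ he he1) (arith6 hγ hμ0 hμ1 hμγ he)
      obtain ⟨m, rfl⟩ : ∃ m, n = m+1 := ⟨n-1, by omega⟩
      set s := (1/2:ℝ)^(m+1) with hsdef
      have hs0 : 0 < s := by positivity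
      refine ⟨m+1, hn1, Or.inr ?_⟩
      have key1 : e*(1+η) ≤ s*(2+γ) := arith7 hγ hμ0 he hsL
      have key2 : η*γ*e ≤ e - s := arith8 hγ hμ0 he hsU
      have hIoo : Set.Ioo ((1 - s + γ*b)/(1+γ)) (min s (b + (1-s)/γ)) ⊆
          {t : ℝ | (t, γ*(t-b)) ∈ En2 (m+1)} := by
        intro t ⟨htl, htr⟩
        simp only [Set.mem_setOf_eq]
        rw [En2_succ, ← hsdef]
        apply mem_tri2 s t (γ*(t-b)) hs0
        · have h' : t < b + (1-s)/γ := lt_of_lt_of_le htr (min_le_right _ _)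
          have h'' : t - b < (1-s)/γ := by linarith
          calc γ*(t-b) = (t-b)*γ := by ring
          _ < 1-s := by rwa [← lt_div_iff₀ hγ]
        · exact lt_of_lt_of_le htr (min_le_left _ _)
        · rw [div_lt_iff₀ hγ1] at htl
          nlinarith
      have hEn2vol : ENNReal.ofReal (min s (b+(1-s)/γ) - (1-s+γ*b)/(1+γ)) ≤
          volume {t : ℝ | (t, γ*(t-b)) ∈ En2 (m+1)} := by
        rw [← Real.volume_Ioo]
        exact measure_mono hIoo
      have hl : t₁ - 0 = e/(1+γ) := by
        rw [ht₁, hedef]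
        ring
      have c1 : η*(t₁-0) + (1-s+γ*b)/(1+γ) ≤ s := by
        rw [hl]
        have heq : s - (η*(e/(1+γ)) + (1-s+γ*b)/(1+γ)) = (s*(2+γ) - e*(1+η))/(1+γ) := by
          rw [hedef]
          field_simp
          ring
        have h0 : (0:ℝ) ≤ (s*(2+γ) - e*(1+η))/(1+γ) := div_nonneg (by linarith) hγ1.le
        linarith
      have c2 : η*(t₁-0) + (1-s+γ*b)/(1+γ) ≤ b + (1-s)/γ := by
        rw [hl]
        have heq : (b + (1-s)/γ) - (η*(e/(1+γ)) + (1-s+γ*b)/(1+γ))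
            = ((e - s) - η*γ*e)/(γ*(1+γ)) := by
          rw [hedef]
          field_simp
          ring
        have h0 : (0:ℝ) ≤ ((e - s) - η*γ*e)/(γ*(1+γ)) :=
          div_nonneg (by linarith) (by positivity)
        linarith
      have hkey : η * (t₁ - 0) ≤ min s (b+(1-s)/γ) - (1-s+γ*b)/(1+γ) := by
        have hmin := le_min c1 c2
        linarith [hmin]
      calc ENNReal.ofReal η * volume {t : ℝ | (t, γ*(t-b)) ∈ E}
          ≤ ENNReal.ofReal η * ENNReal.ofReal (t₁ - 0) := mul_le_mul_right hEvol _
        _ = ENNReal.ofReal (η*(t₁-0)) := (ENNReal.ofReal_mul hη0.le).symm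
        _ ≤ ENNReal.ofReal (min s (b+(1-s)/γ) - (1-s+γ*b)/(1+γ)) :=
            ENNReal.ofReal_le_ofReal hkey
        _ ≤ volume {t : ℝ | (t, γ*(t-b)) ∈ En2 (m+1)} := hEn2vol
  · -- trivial case: empty chord
    refine ⟨1, le_refl 1, Or.inl ?_⟩
    have hz : volume {t : ℝ | (t, γ*(t-b)) ∈ E} = 0 := by
      refine le_antisymm (hEvol.trans ?_) zero_le
      rw [ENNReal.ofReal_eq_zero.mpr (by push_neg at hch; linarith)]
    rw [hz, mul_zero]
    exact zero_le
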